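/- Let m_n = 9 if n = 3, m_n = 7 if n = 4, m_n = 6 if n ∈ {5,6}, and m_n = 5 if n ≥ 7. Then for all integers n ≥ 3 and m ≥ 2, the quantity a_{n,m} := (∑_{j=1}^{m-1} (√2 · sin(πj/m))^{-(n-2)}) − m is positive if and only if m ≥ m_n. -/

import Mathlib

open Real Finset

/-- The threshold `m_n` from the paper. -/
def mThreshold (n : ℕ) : ℕ :=
  if n = 3 then 9 else if n = 4 then 7 else if n ≤ 6 then 6 else 5

section Helpers

lemma sqrt2_lb : (1.4142135 : ℝ) ≤ Real.sqrt 2 := by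
  nlinarith [Real.sq_sqrt (by norm_num : (0:ℝ) ≤ 2), Real.sqrt_nonneg 2]
lemma sqrt2_ub : Real.sqrt 2 ≤ 1.4142136 := by
  nlinarith [Real.sq_sqrt (by norm_num : (0:ℝ) ≤ 2), Real.sqrt_nonneg 2]
lemma sqrt2_pos : (0:ℝ) < Real.sqrt 2 := by positivity
lemma sqrt3_lb : (1.7320508 : ℝ) ≤ Real.sqrt 3 := by
  nlinarith [Real.sq_sqrt (by norm_num : (0:ℝ) ≤ 3), Real.sqrt_nonneg 3]
lemma sqrt3_ub : Real.sqrt 3 ≤ 1.7320509 := by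
  nlinarith [Real.sq_sqrt (by norm_num : (0:ℝ) ≤ 3), Real.sqrt_nonneg 3]
lemma sqrt5_lb : (2.2360679 : ℝ) ≤ Real.sqrt 5 := by
  nlinarith [Real.sq_sqrt (by norm_num : (0:ℝ) ≤ 5), Real.sqrt_nonneg 5]
lemma sqrt5_ub : Real.sqrt 5 ≤ 2.2360680 := by
  nlinarith [Real.sq_sqrt (by norm_num : (0:ℝ) ≤ 5), Real.sqrt_nonneg 5]

lemma sin_pos_aux {j m : ℕ} (hj1 : 1 ≤ j) (hj2 : j < m) : 0 < Real.sin (π * j / m) := by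
  have hm : (0:ℝ) < m := by
    have : 0 < m := by omega
    exact_mod_cast this
  apply Real.sin_pos_of_pos_of_lt_pi
  · have h1 : (0:ℝ) < (j:ℝ) := by exact_mod_cast hj1
    positivity
  · rw [div_lt_iff₀ hm]
    have : (j:ℝ) < m := by exact_mod_cast hj2
    nlinarith [Real.pi_pos]

lemma sin_pos_real {a b : ℝ} (ha : 0 < a) (hab : a < b) : 0 < Real.sin (π * a / b) := by
  have hb : (0:ℝ) < b := lt_trans ha hab
  apply Real.sin_pos_of_pos_of_lt_pi
  · positivity
  · rw [div_lt_iff₀ hb]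
    nlinarith [Real.pi_pos]

lemma term_pos {x : ℝ} (hx : 0 < Real.sin x) (k : ℕ) :
    0 < ((Real.sqrt 2 * Real.sin x)⁻¹) ^ k :=
  pow_pos (inv_pos.mpr (mul_pos sqrt2_pos hx)) k

lemma term_le {x s c : ℝ} (hs0 : 0 < s) (hs : s ≤ Real.sin x)
    (hc : 1 ≤ c * (1.4142135 * s)) (k : ℕ) :
    ((Real.sqrt 2 * Real.sin x)⁻¹) ^ k ≤ c ^ k := by
  have hb : (1.4142135 : ℝ) * s ≤ Real.sqrt 2 * Real.sin x :=
    mul_le_mul sqrt2_lb hs hs0.le sqrt2_pos.le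
  have hb0 : (0:ℝ) < 1.4142135 * s := by positivity
  have h1 : (Real.sqrt 2 * Real.sin x)⁻¹ ≤ (1.4142135 * s)⁻¹ :=
    inv_anti₀ hb0 hb
  have h2 : ((1.4142135:ℝ) * s)⁻¹ ≤ c := by
    rw [inv_le_iff_one_le_mul₀ hb0]
    linarith
  have hsin : 0 < Real.sin x := lt_of_lt_of_le hs0 hs
  exact pow_le_pow_left₀ (inv_pos.mpr (mul_pos sqrt2_pos hsin)).le (h1.trans h2) k

lemma term_ge {x s c : ℝ} (hx : 0 < Real.sin x) (hs : Real.sin x ≤ s)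
    (hc0 : 0 ≤ c) (hc : c * (1.4142136 * s) ≤ 1) (k : ℕ) :
    c ^ k ≤ ((Real.sqrt 2 * Real.sin x)⁻¹) ^ k := by
  have hb : Real.sqrt 2 * Real.sin x ≤ 1.4142136 * s :=
    mul_le_mul sqrt2_ub hs hx.le (by norm_num)
  have hb0 : (0:ℝ) < Real.sqrt 2 * Real.sin x := by positivity
  have h1 : ((1.4142136:ℝ) * s)⁻¹ ≤ (Real.sqrt 2 * Real.sin x)⁻¹ :=
    inv_anti₀ hb0 hb
  have h2 : c ≤ ((1.4142136:ℝ) * s)⁻¹ := by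
    have hs0 : (0:ℝ) < 1.4142136 * s := lt_of_lt_of_le hb0 hb
    rw [inv_eq_one_div, le_div_iff₀ hs0]
    linarith
  exact pow_le_pow_left₀ hc0 (h2.trans h1) k

lemma sin_ub_lin {q : ℝ} (a b : ℝ) (ha : 0 ≤ a) (hb : 0 < b)
    (hq : 3.141593 * a / b ≤ q) : Real.sin (π * a / b) ≤ q := by
  have h1 : Real.sin (π*a/b) ≤ π*a/b := Real.sin_le (by positivity)
  have h2 : π*a/b ≤ 3.141593*a/b := by
    gcongr
    exact Real.pi_lt_d6.le
  linarith

lemma sin_lb_quad (a b r : ℝ) (ha : 0 < a) (h2ab : 2*a ≤ b) (hr : 0 ≤ r)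
    (h : 3.141593 * (b - 2*a) / (2*b) ≤ r) : 1 - r^2/2 ≤ Real.sin (π * a / b) := by
  have hb : (0:ℝ) < b := by linarith
  have key : π * a / b = π/2 - π * (b - 2*a)/(2*b) := by field_simp; ring
  rw [key, Real.sin_pi_div_two_sub]
  have hba : (0:ℝ) ≤ b - 2*a := by linarith
  have hθ0 : 0 ≤ π * (b-2*a)/(2*b) := by positivity
  have hθ2 : π * (b-2*a)/(2*b) ≤ r := by
    refine le_trans ?_ h
    gcongr
    exact Real.pi_lt_d6.le
  have hcos := Real.one_sub_sq_div_two_le_cos (x := π*(b-2*a)/(2*b))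
  nlinarith [hθ0, hθ2]

lemma sin_lb_cube (a b l u : ℝ) (ha : 0 < a) (hb : 0 < b) (hl : 0 < l)
    (hlx : l ≤ 3.141592 * a / b) (hxu : 3.141593 * a / b ≤ u) (hu1 : u ≤ 1) :
    l - u^3/4 ≤ Real.sin (π * a / b) := by
  have hx : 0 < π * a / b := by positivity
  have hxl : l ≤ π * a / b := by
    refine le_trans hlx ?_
    gcongr
    exact Real.pi_gt_d6.le
  have hxu' : π * a / b ≤ u := by
    refine le_trans ?_ hxu
    gcongr
    exact Real.pi_lt_d6.le
  have h := Real.sin_gt_sub_cube hx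
  have hcube : (π*a/b)^3 ≤ u^3 := pow_le_pow_left₀ hx.le hxu' 3
  linarith [pow_pos hx 3]

-- canonical sin value bounds
lemma s16_lb : (0.5:ℝ) ≤ Real.sin (π/6) := by rw [Real.sin_pi_div_six]; norm_num
lemma s16_ub : Real.sin (π/6) ≤ 0.5 := by rw [Real.sin_pi_div_six]; norm_num
lemma s13_lb : (0.8660254:ℝ) ≤ Real.sin (π/3) := by
  rw [Real.sin_pi_div_three]; nlinarith [sqrt3_lb]
lemma s13_ub : Real.sin (π/3) ≤ 0.8660255 := by
  rw [Real.sin_pi_div_three]; nlinarith [sqrt3_ub]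
lemma s14_lb : (0.7071067:ℝ) ≤ Real.sin (π/4) := by
  rw [Real.sin_pi_div_four]; nlinarith [sqrt2_lb]
lemma s14_ub : Real.sin (π/4) ≤ 0.7071068 := by
  rw [Real.sin_pi_div_four]; nlinarith [sqrt2_ub]

lemma s15_sq : Real.sin (π * 1 / 5) ^ 2 = 1 - ((1 + Real.sqrt 5)/4)^2 := by
  rw [show (π * 1 / 5 : ℝ) = π/5 by ring]
  have h := Real.sin_sq_add_cos_sq (π/5)
  rw [Real.cos_pi_div_five] at h
  linarith

lemma s15_nonneg : 0 ≤ Real.sin (π * 1 / 5) :=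
  (sin_pos_real (by norm_num) (by norm_num)).le

lemma s15_lb : (0.5877852:ℝ) ≤ Real.sin (π * 1 / 5) := by
  nlinarith [s15_sq, s15_nonneg, sqrt5_ub, sqrt5_lb,
    Real.sq_sqrt (by norm_num : (0:ℝ) ≤ 5), Real.sqrt_nonneg 5]
lemma s15_ub : Real.sin (π * 1 / 5) ≤ 0.5877853 := by
  nlinarith [s15_sq, s15_nonneg, sqrt5_ub, sqrt5_lb,
    Real.sq_sqrt (by norm_num : (0:ℝ) ≤ 5), Real.sqrt_nonneg 5]

end Helpers
section Sums

lemma sum_pair_le {m k : ℕ} (hmk : 2*k < m) (g : ℕ → ℝ)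
    (hpos : ∀ j, 1 ≤ j → j ≤ m-1 → 0 ≤ g j)
    (hsym : ∀ j, 1 ≤ j → j ≤ k → g (m - j) = g j) :
    2 * ∑ j ∈ Finset.Icc 1 k, g j ≤ ∑ j ∈ Finset.Icc 1 (m-1), g j := by
  have hsub : Finset.Icc 1 k ∪ Finset.Icc (m-k) (m-1) ⊆ Finset.Icc 1 (m-1) := by
    intro a ha
    simp only [Finset.mem_union, Finset.mem_Icc] at ha ⊢
    omega
  have hdisj : Disjoint (Finset.Icc 1 k) (Finset.Icc (m-k) (m-1)) := by
    rw [Finset.disjoint_left]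
    intro a ha hb
    simp only [Finset.mem_Icc] at ha hb
    omega
  have hre : ∑ j ∈ Finset.Icc (m-k) (m-1), g j = ∑ j ∈ Finset.Icc 1 k, g j := by
    refine Finset.sum_nbij' (fun j => m - j) (fun j => m - j) ?_ ?_ ?_ ?_ ?_
    · intro a ha; simp only [Finset.mem_Icc] at ha ⊢; omega
    · intro a ha; simp only [Finset.mem_Icc] at ha ⊢; omega
    · intro a ha; simp only [Finset.mem_Icc] at ha; show m - (m - a) = a; omega
    · intro a ha; simp only [Finset.mem_Icc] at ha; show m - (m - a) = a; omega
    · intro a ha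
      simp only [Finset.mem_Icc] at ha
      have h := hsym (m - a) (by omega) (by omega)
      rw [show m - (m - a) = a by omega] at h
      exact h
  calc 2 * ∑ j ∈ Finset.Icc 1 k, g j
      = ∑ j ∈ Finset.Icc 1 k, g j + ∑ j ∈ Finset.Icc (m-k) (m-1), g j := by rw [hre]; ring
    _ = ∑ j ∈ Finset.Icc 1 k ∪ Finset.Icc (m-k) (m-1), g j :=
        (Finset.sum_union hdisj).symm
    _ ≤ ∑ j ∈ Finset.Icc 1 (m-1), g j := by
        refine Finset.sum_le_sum_of_subset_of_nonneg hsub ?_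
        intro j hj _
        simp only [Finset.mem_Icc] at hj
        exact hpos j hj.1 hj.2

lemma sin_mirror {j m : ℕ} (hj : j ≤ m) (hm : 1 ≤ m) :
    Real.sin (π * ((m - j : ℕ):ℝ) / m) = Real.sin (π * j / m) := by
  have hm0 : ((m:ℝ)) ≠ 0 := by positivity
  have hc : ((m - j : ℕ):ℝ) = (m:ℝ) - j := by
    push_cast [hj]; ring
  rw [hc, show π * ((m:ℝ) - j) / m = π - π * j / m by field_simp, Real.sin_pi_sub]

lemma t_lower_harm {j m : ℕ} (hj1 : 1 ≤ j) (hjm : j < m) :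
    (m:ℝ)/(4.4428843 * j) ≤ (Real.sqrt 2 * Real.sin (π * j / m))⁻¹ := by
  have hs := sin_pos_aux hj1 hjm
  have hj0 : (0:ℝ) < j := by exact_mod_cast hj1
  have hm0 : (0:ℝ) < m := by
    have : 0 < m := by omega
    exact_mod_cast this
  have h1 : Real.sin (π*j/m) ≤ π*j/m := Real.sin_le (by positivity)
  have h2 : Real.sqrt 2 * Real.sin (π*(j:ℝ)/m) ≤ 4.4428843 * j / m := by
    have hp : π*(j:ℝ)/m ≤ 3.141593*j/m := by
      have := Real.pi_lt_d6.le
      have hjm' : (0:ℝ) ≤ (j:ℝ)/m := by positivity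
      calc π*(j:ℝ)/m = π * ((j:ℝ)/m) := by ring
        _ ≤ 3.141593 * ((j:ℝ)/m) := by nlinarith
        _ = 3.141593*(j:ℝ)/m := by ring
    calc Real.sqrt 2 * Real.sin (π*(j:ℝ)/m) ≤ 1.4142136 * (3.141593*j/m) :=
          mul_le_mul sqrt2_ub (h1.trans hp) hs.le (by norm_num)
      _ ≤ 4.4428843 * j / m := by
          rw [show (1.4142136:ℝ) * (3.141593*j/m) = 1.4142136 * 3.141593 * j / m by ring]
          gcongr <;> norm_num
  have hb0 : (0:ℝ) < Real.sqrt 2 * Real.sin (π*(j:ℝ)/m) := by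
    have := sqrt2_pos
    positivity
  have h3 := inv_anti₀ hb0 h2
  calc (m:ℝ)/(4.4428843 * j) = ((4.4428843:ℝ) * j / m)⁻¹ := by
        rw [inv_div]
    _ ≤ (Real.sqrt 2 * Real.sin (π*(j:ℝ)/m))⁻¹ := h3

lemma neg_small {m : ℕ} (k : ℕ) (hm2 : 2 ≤ m) (hm4 : m ≤ 4) :
    ∑ j ∈ Finset.Icc 1 (m-1), ((Real.sqrt 2 * Real.sin (π * j / m))⁻¹)^k ≤ (m:ℝ) := by
  have hsq : Real.sqrt 2 * (Real.sqrt 2/2) = 1 := by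
    have h := Real.mul_self_sqrt (show (0:ℝ) ≤ 2 by norm_num)
    linarith
  have hterm : ∀ j ∈ Finset.Icc 1 (m-1), ((Real.sqrt 2 * Real.sin (π * j / m))⁻¹)^k ≤ 1 := by
    intro j hj
    simp only [Finset.mem_Icc] at hj
    obtain ⟨hj1, hj2⟩ := hj
    have hsin : Real.sqrt 2 / 2 ≤ Real.sin (π * j / m) := by
      interval_cases m <;> interval_cases j
      · rw [show (π * ((1:ℕ):ℝ) / ((2:ℕ):ℝ)) = π/2 by push_cast; ring, Real.sin_pi_div_two]
        nlinarith [sqrt2_ub]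
      · rw [show (π * ((1:ℕ):ℝ) / ((3:ℕ):ℝ)) = π/3 by push_cast; ring, Real.sin_pi_div_three]
        nlinarith [sqrt3_lb, sqrt2_ub]
      · rw [show (π * ((2:ℕ):ℝ) / ((3:ℕ):ℝ)) = π - π/3 by push_cast; ring, Real.sin_pi_sub,
            Real.sin_pi_div_three]
        nlinarith [sqrt3_lb, sqrt2_ub]
      · rw [show (π * ((1:ℕ):ℝ) / ((4:ℕ):ℝ)) = π/4 by push_cast; ring, Real.sin_pi_div_four]
      · rw [show (π * ((2:ℕ):ℝ) / ((4:ℕ):ℝ)) = π/2 by push_cast; ring, Real.sin_pi_div_two]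
        nlinarith [sqrt2_ub]
      · rw [show (π * ((3:ℕ):ℝ) / ((4:ℕ):ℝ)) = π - π/4 by push_cast; ring, Real.sin_pi_sub,
            Real.sin_pi_div_four]
    have hbase : 1 ≤ Real.sqrt 2 * Real.sin (π * j / m) := by
      have h3 := mul_le_mul_of_nonneg_left hsin sqrt2_pos.le
      linarith
    calc ((Real.sqrt 2 * Real.sin (π * j / m))⁻¹)^k ≤ 1^k := by
          apply pow_le_pow_left₀
          · positivity
          · exact inv_le_one_of_one_le₀ hbase
      _ = 1 := one_pow k
  calc ∑ j ∈ Finset.Icc 1 (m-1), ((Real.sqrt 2 * Real.sin (π * j / m))⁻¹)^k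
      ≤ ∑ _j ∈ Finset.Icc 1 (m-1), (1:ℝ) := Finset.sum_le_sum hterm
    _ = ((Finset.Icc 1 (m-1)).card : ℝ) := by simp
    _ ≤ (m:ℝ) := by
        rw [Nat.card_Icc]
        have h : m - 1 + 1 - 1 ≤ m := by omega
        exact_mod_cast h

lemma main_lower (k : ℕ) {m : ℕ} (hm : 3 ≤ m) :
    2 * ((Real.sqrt 2 * Real.sin (π * (1:ℕ) / m))⁻¹)^k
      ≤ ∑ j ∈ Finset.Icc 1 (m-1), ((Real.sqrt 2 * Real.sin (π * j / m))⁻¹)^k := by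
  have h := sum_pair_le (m := m) (k := 1) (by omega)
      (fun j => ((Real.sqrt 2 * Real.sin (π * j / m))⁻¹)^k) ?_ ?_
  · rw [Finset.Icc_self, Finset.sum_singleton] at h
    exact h
  · intro j hj1 hj2
    exact (term_pos (sin_pos_aux hj1 (by omega)) k).le
  · intro j hj1 hj2
    have hj : j = 1 := by omega
    subst hj
    show ((Real.sqrt 2 * Real.sin (π * ((m-1:ℕ):ℝ) / m))⁻¹)^k = _
    rw [sin_mirror (by omega) (by omega)]

end Sums
section Tails

lemma n3_tail {m : ℕ} (hm : 11 ≤ m) :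
    (m:ℝ) < ∑ j ∈ Finset.Icc 1 (m-1), ((Real.sqrt 2 * Real.sin (π * j / m))⁻¹)^(3-2) := by
  simp only [show (3:ℕ)-2 = 1 by norm_num, pow_one]
  have h := sum_pair_le (m := m) (k := 5) (by omega)
      (fun j => (Real.sqrt 2 * Real.sin (π * j / m))⁻¹) ?_ ?_
  · rw [show (Finset.Icc 1 5) = ({1,2,3,4,5} : Finset ℕ) from rfl] at h
    rw [Finset.sum_insert (by decide), Finset.sum_insert (by decide),
        Finset.sum_insert (by decide), Finset.sum_insert (by decide),
        Finset.sum_singleton] at h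
    have h1 := t_lower_harm (j := 1) (m := m) (by norm_num) (by omega)
    have h2 := t_lower_harm (j := 2) (m := m) (by norm_num) (by omega)
    have h3 := t_lower_harm (j := 3) (m := m) (by norm_num) (by omega)
    have h4 := t_lower_harm (j := 4) (m := m) (by norm_num) (by omega)
    have h5 := t_lower_harm (j := 5) (m := m) (by norm_num) (by omega)
    push_cast at h1 h2 h3 h4 h5 h ⊢
    rw [div_le_iff₀ (by norm_num)] at h1 h2 h3 h4 h5
    have hm' : (11:ℝ) ≤ m := by exact_mod_cast hm
    linarith [h, h1, h2, h3, h4, h5, hm']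
  · intro j hj1 hj2
    exact (inv_pos.mpr (mul_pos sqrt2_pos (sin_pos_aux hj1 (by omega)))).le
  · intro j hj1 hj2
    show (Real.sqrt 2 * Real.sin (π * ((m-j:ℕ):ℝ) / m))⁻¹ = _
    rw [sin_mirror (by omega) (by omega)]

lemma cast_one_angle {m : ℕ} : (π * ((1:ℕ):ℝ) / m) = π * 1 / m := by norm_num

lemma n4_tail {m : ℕ} (hm : 10 ≤ m) :
    (m:ℝ) < ∑ j ∈ Finset.Icc 1 (m-1), ((Real.sqrt 2 * Real.sin (π * j / m))⁻¹)^(4-2) := by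
  have hml := main_lower (4-2) (show 3 ≤ m by omega)
  refine lt_of_lt_of_le ?_ hml
  have h1 := t_lower_harm (j := 1) (m := m) (by norm_num) (by omega)
  rw [Nat.cast_one, mul_one] at h1
  rw [Nat.cast_one]
  have hm' : (10:ℝ) ≤ m := by exact_mod_cast hm
  have hm0 : (0:ℝ) ≤ m := by positivity
  have hp : ((m:ℝ)/4.4428843)^2 ≤ ((Real.sqrt 2 * Real.sin (π * 1 / (m:ℝ)))⁻¹)^2 :=
    pow_le_pow_left₀ (by positivity) h1 2
  rw [div_pow, div_le_iff₀ (by norm_num), show ((4.4428843:ℝ))^2 = 19.73922090318649 by norm_num] at hp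
  have hc : (10:ℝ) ≤ (m:ℝ)^1 := by
    calc (10:ℝ) = 10^1 := by norm_num
      _ ≤ (m:ℝ)^1 := pow_le_pow_left₀ (by norm_num) hm' 1
  have key : 10*(m:ℝ) ≤ (m:ℝ)^2 := by
    nlinarith [mul_le_mul_of_nonneg_right hc hm0]
  rw [show ((4:ℕ) - 2) = 2 by norm_num]
  nlinarith [hp, key, hm']

lemma n5_tail {m : ℕ} (hm : 7 ≤ m) :
    (m:ℝ) < ∑ j ∈ Finset.Icc 1 (m-1), ((Real.sqrt 2 * Real.sin (π * j / m))⁻¹)^(5-2) := by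
  have hml := main_lower (5-2) (show 3 ≤ m by omega)
  refine lt_of_lt_of_le ?_ hml
  have h1 := t_lower_harm (j := 1) (m := m) (by norm_num) (by omega)
  rw [Nat.cast_one, mul_one] at h1
  rw [Nat.cast_one]
  have hm' : (7:ℝ) ≤ m := by exact_mod_cast hm
  have hm0 : (0:ℝ) ≤ m := by positivity
  have hp : ((m:ℝ)/4.4428843)^3 ≤ ((Real.sqrt 2 * Real.sin (π * 1 / (m:ℝ)))⁻¹)^3 :=
    pow_le_pow_left₀ (by positivity) h1 3
  rw [div_pow, div_le_iff₀ (by norm_num), show ((4.4428843:ℝ))^3 = 87.699074644999076393107 by norm_num] at hp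
  have hc : (49:ℝ) ≤ (m:ℝ)^2 := by
    calc (49:ℝ) = 7^2 := by norm_num
      _ ≤ (m:ℝ)^2 := pow_le_pow_left₀ (by norm_num) hm' 2
  have key : 49*(m:ℝ) ≤ (m:ℝ)^3 := by
    nlinarith [mul_le_mul_of_nonneg_right hc hm0]
  rw [show ((5:ℕ) - 2) = 3 by norm_num]
  nlinarith [hp, key, hm']

lemma n6_tail {m : ℕ} (hm : 6 ≤ m) :
    (m:ℝ) < ∑ j ∈ Finset.Icc 1 (m-1), ((Real.sqrt 2 * Real.sin (π * j / m))⁻¹)^(6-2) := by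
  have hml := main_lower (6-2) (show 3 ≤ m by omega)
  refine lt_of_lt_of_le ?_ hml
  have h1 := t_lower_harm (j := 1) (m := m) (by norm_num) (by omega)
  rw [Nat.cast_one, mul_one] at h1
  rw [Nat.cast_one]
  have hm' : (6:ℝ) ≤ m := by exact_mod_cast hm
  have hm0 : (0:ℝ) ≤ m := by positivity
  have hp : ((m:ℝ)/4.4428843)^4 ≤ ((Real.sqrt 2 * Real.sin (π * 1 / (m:ℝ)))⁻¹)^4 :=
    pow_le_pow_left₀ (by positivity) h1 4
  rw [div_pow, div_le_iff₀ (by norm_num), show ((4.4428843:ℝ))^4 = 389.6368418647944700214357185201 by norm_num] at hp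
  have hc : (216:ℝ) ≤ (m:ℝ)^3 := by
    calc (216:ℝ) = 6^3 := by norm_num
      _ ≤ (m:ℝ)^3 := pow_le_pow_left₀ (by norm_num) hm' 3
  have key : 216*(m:ℝ) ≤ (m:ℝ)^4 := by
    nlinarith [mul_le_mul_of_nonneg_right hc hm0]
  rw [show ((6:ℕ) - 2) = 4 by norm_num]
  nlinarith [hp, key, hm']

lemma n7_tail {n m : ℕ} (hn : 7 ≤ n) (hm : 6 ≤ m) :
    (m:ℝ) < ∑ j ∈ Finset.Icc 1 (m-1), ((Real.sqrt 2 * Real.sin (π * j / m))⁻¹)^(n-2) := by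
  have hml := main_lower (n-2) (show 3 ≤ m by omega)
  refine lt_of_lt_of_le ?_ hml
  have h1 := t_lower_harm (j := 1) (m := m) (by norm_num) (by omega)
  rw [Nat.cast_one, mul_one] at h1
  rw [Nat.cast_one]
  have hm' : (6:ℝ) ≤ m := by exact_mod_cast hm
  have hm0 : (0:ℝ) ≤ m := by positivity
  have ht1 : (1:ℝ) ≤ (Real.sqrt 2 * Real.sin (π * 1 / (m:ℝ)))⁻¹ := by
    refine le_trans ?_ h1
    rw [le_div_iff₀ (by norm_num)]
    linarith
  have hp : ((m:ℝ)/4.4428843)^5 ≤ ((Real.sqrt 2 * Real.sin (π * 1 / (m:ℝ)))⁻¹)^5 :=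
    pow_le_pow_left₀ (by positivity) h1 5
  rw [div_pow, div_le_iff₀ (by norm_num),
      show ((4.4428843:ℝ))^5 = 1731.11140742267807358505741727217152443 by norm_num] at hp
  have hmono : ((Real.sqrt 2 * Real.sin (π * 1 / (m:ℝ)))⁻¹)^5
      ≤ ((Real.sqrt 2 * Real.sin (π * 1 / (m:ℝ)))⁻¹)^(n-2) :=
    pow_le_pow_right₀ ht1 (by omega)
  have hc : (1296:ℝ) ≤ (m:ℝ)^4 := by
    calc (1296:ℝ) = 6^4 := by norm_num
      _ ≤ (m:ℝ)^4 := pow_le_pow_left₀ (by norm_num) hm' 4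
  have key : 1296*(m:ℝ) ≤ (m:ℝ)^5 := by
    nlinarith [mul_le_mul_of_nonneg_right hc hm0]
  nlinarith [hp, hmono, key, hm']

lemma n7_m5 {n : ℕ} (hn : 7 ≤ n) :
    ((5:ℕ):ℝ) < ∑ j ∈ Finset.Icc (1:ℕ) (5-1), ((Real.sqrt 2 * Real.sin (π * (j:ℝ) / ((5:ℕ):ℝ)))⁻¹)^(n-2) := by
  have hml := main_lower (n-2) (m := 5) (by norm_num)
  refine lt_of_lt_of_le ?_ hml
  rw [show (π * ((1:ℕ):ℝ) / ((5:ℕ):ℝ)) = π * 1 / 5 by norm_num]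
  have ht := term_ge (x := π * 1/5) (c := 1.203) (sin_pos_real (by norm_num) (by norm_num))
      s15_ub (by norm_num) (by norm_num) (n-2)
  have hmono : (1.203:ℝ)^5 ≤ (1.203:ℝ)^(n-2) :=
    pow_le_pow_right₀ (by norm_num) (by omega)
  have hv : (2.51:ℝ) ≤ (1.203:ℝ)^5 := by norm_num
  have h5 : ((5:ℕ):ℝ) = 5 := by norm_num
  rw [h5]
  linarith [ht, hmono, hv]

end Tails
set_option maxHeartbeats 2000000 in
theorem stmt_12 (n m : ℕ) (hn : 3 ≤ n) (hm : 2 ≤ m) :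
    0 < (∑ j ∈ Finset.Icc 1 (m - 1), (Real.sqrt 2 * Real.sin (π * j / m))⁻¹ ^ (n - 2))
        - (m : ℝ) ↔ mThreshold n ≤ m := by
  rw [sub_pos]
  by_cases h3 : n = 3
  · subst h3
    rcases lt_or_ge m 11 with hmu | hmu
    · interval_cases m
      · exact iff_of_false (not_lt.mpr (neg_small _ (by norm_num) (by norm_num))) (by decide)
      · exact iff_of_false (not_lt.mpr (neg_small _ (by norm_num) (by norm_num))) (by decide)
      · exact iff_of_false (not_lt.mpr (neg_small _ (by norm_num) (by norm_num))) (by decide)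
      · refine iff_of_false (not_lt.mpr ?_) (by decide)
        rw [show (Finset.Icc 1 (5-1) : Finset ℕ) = ({1,2,3,4} : Finset ℕ) from rfl]
        rw [Finset.sum_insert (by decide), Finset.sum_insert (by decide), Finset.sum_insert (by decide), Finset.sum_singleton]
        push_cast
        rw [show (π * 4 / 5 : ℝ) = π - π * 1 / 5 by ring, Real.sin_pi_sub]
        rw [show (π * 3 / 5 : ℝ) = π - π * 2 / 5 by ring, Real.sin_pi_sub]
        have hs1 : ((0.5877852:ℝ)) ≤ Real.sin (π * 1 / 5) := s15_lb
        have B1 : (Real.sqrt 2 * Real.sin (π * 1 / 5))⁻¹ ^ 1 ≤ (1.2030021:ℝ)^1 := term_le (by norm_num) hs1 (by norm_num) 1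
        have hs2 : ((1 - (0.3141593:ℝ)^2/2)) ≤ Real.sin (π * 2 / 5) := sin_lb_quad (a:=2) (b:=5) (r:=0.3141593) (by norm_num) (by norm_num) (by norm_num) (by norm_num)
        have B2 : (Real.sqrt 2 * Real.sin (π * 2 / 5))⁻¹ ^ 1 ≤ (0.7438125:ℝ)^1 := term_le (by norm_num) hs2 (by norm_num) 1
        linarith [B1, B2]
      · refine iff_of_false (not_lt.mpr ?_) (by decide)
        rw [show (Finset.Icc 1 (6-1) : Finset ℕ) = ({1,2,3,4,5} : Finset ℕ) from rfl]
        rw [Finset.sum_insert (by decide), Finset.sum_insert (by decide), Finset.sum_insert (by decide), Finset.sum_insert (by decide), Finset.sum_singleton]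
        push_cast
        rw [show (π * 5 / 6 : ℝ) = π - π * 1 / 6 by ring, Real.sin_pi_sub]
        rw [show (π * 4 / 6 : ℝ) = π - π * 2 / 6 by ring, Real.sin_pi_sub]
        rw [show (π * 1 / 6 : ℝ) = π/6 by ring]
        rw [show (π * 2 / 6 : ℝ) = π/3 by ring]
        rw [show (π * 3 / 6 : ℝ) = π/2 by ring]
        have hs1 : ((0.5:ℝ)) ≤ Real.sin (π/6) := s16_lb
        have B1 : (Real.sqrt 2 * Real.sin (π/6))⁻¹ ^ 1 ≤ (1.4142137:ℝ)^1 := term_le (by norm_num) hs1 (by norm_num) 1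
        have hs2 : ((0.8660254:ℝ)) ≤ Real.sin (π/3) := s13_lb
        have B2 : (Real.sqrt 2 * Real.sin (π/3))⁻¹ ^ 1 ≤ (0.8164967:ℝ)^1 := term_le (by norm_num) hs2 (by norm_num) 1
        have hs3 : ((1:ℝ)) ≤ Real.sin (π/2) := Real.sin_pi_div_two.ge
        have B3 : (Real.sqrt 2 * Real.sin (π/2))⁻¹ ^ 1 ≤ (0.7071069:ℝ)^1 := term_le (by norm_num) hs3 (by norm_num) 1
        linarith [B1, B2, B3]
      · refine iff_of_false (not_lt.mpr ?_) (by decide)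
        rw [show (Finset.Icc 1 (7-1) : Finset ℕ) = ({1,2,3,4,5,6} : Finset ℕ) from rfl]
        rw [Finset.sum_insert (by decide), Finset.sum_insert (by decide), Finset.sum_insert (by decide), Finset.sum_insert (by decide), Finset.sum_insert (by decide), Finset.sum_singleton]
        push_cast
        rw [show (π * 6 / 7 : ℝ) = π - π * 1 / 7 by ring, Real.sin_pi_sub]
        rw [show (π * 5 / 7 : ℝ) = π - π * 2 / 7 by ring, Real.sin_pi_sub]
        rw [show (π * 4 / 7 : ℝ) = π - π * 3 / 7 by ring, Real.sin_pi_sub]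
        have hs1 : (((0.4487988:ℝ) - (0.448799:ℝ)^3/4)) ≤ Real.sin (π * 1 / 7) := sin_lb_cube (a:=1) (b:=7) (l:=0.4487988) (u:=0.448799) (by norm_num) (by norm_num) (by norm_num) (by norm_num) (by norm_num) (by norm_num)
        have B1 : (Real.sqrt 2 * Real.sin (π * 1 / 7))⁻¹ ^ 1 ≤ (1.6590984:ℝ)^1 := term_le (by norm_num) hs1 (by norm_num) 1
        have hs2 : ((1 - (0.6731985:ℝ)^2/2)) ≤ Real.sin (π * 2 / 7) := sin_lb_quad (a:=2) (b:=7) (r:=0.6731985) (by norm_num) (by norm_num) (by norm_num) (by norm_num)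
        have B2 : (Real.sqrt 2 * Real.sin (π * 2 / 7))⁻¹ ^ 1 ≤ (0.9142813:ℝ)^1 := term_le (by norm_num) hs2 (by norm_num) 1
        have hs3 : ((1 - (0.2243995:ℝ)^2/2)) ≤ Real.sin (π * 3 / 7) := sin_lb_quad (a:=3) (b:=7) (r:=0.2243995) (by norm_num) (by norm_num) (by norm_num) (by norm_num)
        have B3 : (Real.sqrt 2 * Real.sin (π * 3 / 7))⁻¹ ^ 1 ≤ (0.7253699:ℝ)^1 := term_le (by norm_num) hs3 (by norm_num) 1
        linarith [B1, B2, B3]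
      · refine iff_of_false (not_lt.mpr ?_) (by decide)
        rw [show (Finset.Icc 1 (8-1) : Finset ℕ) = ({1,2,3,4,5,6,7} : Finset ℕ) from rfl]
        rw [Finset.sum_insert (by decide), Finset.sum_insert (by decide), Finset.sum_insert (by decide), Finset.sum_insert (by decide), Finset.sum_insert (by decide), Finset.sum_insert (by decide), Finset.sum_singleton]
        push_cast
        rw [show (π * 7 / 8 : ℝ) = π - π * 1 / 8 by ring, Real.sin_pi_sub]
        rw [show (π * 6 / 8 : ℝ) = π - π * 2 / 8 by ring, Real.sin_pi_sub]
        rw [show (π * 5 / 8 : ℝ) = π - π * 3 / 8 by ring, Real.sin_pi_sub]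
        rw [show (π * 2 / 8 : ℝ) = π/4 by ring]
        rw [show (π * 4 / 8 : ℝ) = π/2 by ring]
        have hs1 : (((0.392699:ℝ) - (0.3926992:ℝ)^3/4)) ≤ Real.sin (π * 1 / 8) := sin_lb_cube (a:=1) (b:=8) (l:=0.392699) (u:=0.3926992) (by norm_num) (by norm_num) (by norm_num) (by norm_num) (by norm_num) (by norm_num)
        have B1 : (Real.sqrt 2 * Real.sin (π * 1 / 8))⁻¹ ^ 1 ≤ (1.872837:ℝ)^1 := term_le (by norm_num) hs1 (by norm_num) 1
        have hs2 : ((0.7071067:ℝ)) ≤ Real.sin (π/4) := s14_lb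
        have B2 : (Real.sqrt 2 * Real.sin (π/4))⁻¹ ^ 1 ≤ (1.0000002:ℝ)^1 := term_le (by norm_num) hs2 (by norm_num) 1
        have hs3 : ((1 - (0.3926992:ℝ)^2/2)) ≤ Real.sin (π * 3 / 8) := sin_lb_quad (a:=3) (b:=8) (r:=0.3926992) (by norm_num) (by norm_num) (by norm_num) (by norm_num)
        have B3 : (Real.sqrt 2 * Real.sin (π * 3 / 8))⁻¹ ^ 1 ≤ (0.7661845:ℝ)^1 := term_le (by norm_num) hs3 (by norm_num) 1
        have hs4 : ((1:ℝ)) ≤ Real.sin (π/2) := Real.sin_pi_div_two.ge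
        have B4 : (Real.sqrt 2 * Real.sin (π/2))⁻¹ ^ 1 ≤ (0.7071069:ℝ)^1 := term_le (by norm_num) hs4 (by norm_num) 1
        linarith [B1, B2, B3, B4]
      · refine iff_of_true ?_ (by decide)
        rw [show (Finset.Icc 1 (9-1) : Finset ℕ) = ({1,2,3,4,5,6,7,8} : Finset ℕ) from rfl]
        rw [Finset.sum_insert (by decide), Finset.sum_insert (by decide), Finset.sum_insert (by decide), Finset.sum_insert (by decide), Finset.sum_insert (by decide), Finset.sum_insert (by decide), Finset.sum_insert (by decide), Finset.sum_singleton]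
        push_cast
        rw [show (π * 8 / 9 : ℝ) = π - π * 1 / 9 by ring, Real.sin_pi_sub]
        rw [show (π * 7 / 9 : ℝ) = π - π * 2 / 9 by ring, Real.sin_pi_sub]
        rw [show (π * 6 / 9 : ℝ) = π - π * 3 / 9 by ring, Real.sin_pi_sub]
        rw [show (π * 5 / 9 : ℝ) = π - π * 4 / 9 by ring, Real.sin_pi_sub]
        rw [show (π * 3 / 9 : ℝ) = π/3 by ring]
        have hs1 : Real.sin (π * 1 / 9) ≤ (0.3490659) := sin_ub_lin (a:=1) (b:=9) (q:=0.3490659) (by norm_num) (by norm_num) (by norm_num)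
        have B1 : (2.0257113:ℝ)^1 ≤ (Real.sqrt 2 * Real.sin (π * 1 / 9))⁻¹ ^ 1 := term_ge (sin_pos_real (by norm_num) (by norm_num)) hs1 (by norm_num) (by norm_num) 1
        have hs2 : Real.sin (π * 2 / 9) ≤ (0.6981318) := sin_ub_lin (a:=2) (b:=9) (q:=0.6981318) (by norm_num) (by norm_num) (by norm_num)
        have B2 : (1.0128556:ℝ)^1 ≤ (Real.sqrt 2 * Real.sin (π * 2 / 9))⁻¹ ^ 1 := term_ge (sin_pos_real (by norm_num) (by norm_num)) hs2 (by norm_num) (by norm_num) 1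
        have hs3 : Real.sin (π/3) ≤ ((0.8660255:ℝ)) := s13_ub
        have B3 : (0.8164964:ℝ)^1 ≤ (Real.sqrt 2 * Real.sin (π/3))⁻¹ ^ 1 := term_ge (by rw [Real.sin_pi_div_three]; positivity) hs3 (by norm_num) (by norm_num) 1
        have hs4 : Real.sin (π * 4 / 9) ≤ ((1:ℝ)) := Real.sin_le_one _
        have B4 : (0.7071067:ℝ)^1 ≤ (Real.sqrt 2 * Real.sin (π * 4 / 9))⁻¹ ^ 1 := term_ge (sin_pos_real (by norm_num) (by norm_num)) hs4 (by norm_num) (by norm_num) 1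
        linarith [B1, B2, B3, B4]
      · refine iff_of_true ?_ (by decide)
        rw [show (Finset.Icc 1 (10-1) : Finset ℕ) = ({1,2,3,4,5,6,7,8,9} : Finset ℕ) from rfl]
        rw [Finset.sum_insert (by decide), Finset.sum_insert (by decide), Finset.sum_insert (by decide), Finset.sum_insert (by decide), Finset.sum_insert (by decide), Finset.sum_insert (by decide), Finset.sum_insert (by decide), Finset.sum_insert (by decide), Finset.sum_singleton]
        push_cast
        rw [show (π * 9 / 10 : ℝ) = π - π * 1 / 10 by ring, Real.sin_pi_sub]
        rw [show (π * 8 / 10 : ℝ) = π - π * 2 / 10 by ring, Real.sin_pi_sub]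
        rw [show (π * 7 / 10 : ℝ) = π - π * 3 / 10 by ring, Real.sin_pi_sub]
        rw [show (π * 6 / 10 : ℝ) = π - π * 4 / 10 by ring, Real.sin_pi_sub]
        rw [show (π * 2 / 10 : ℝ) = π * 1 / 5 by ring]
        rw [show (π * 5 / 10 : ℝ) = π/2 by ring]
        have hs1 : Real.sin (π * 1 / 10) ≤ (0.3141593) := sin_ub_lin (a:=1) (b:=10) (q:=0.3141593) (by norm_num) (by norm_num) (by norm_num)
        have B1 : (2.2507904:ℝ)^1 ≤ (Real.sqrt 2 * Real.sin (π * 1 / 10))⁻¹ ^ 1 := term_ge (sin_pos_real (by norm_num) (by norm_num)) hs1 (by norm_num) (by norm_num) 1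
        have hs2 : Real.sin (π * 1 / 5) ≤ ((0.5877853:ℝ)) := s15_ub
        have B2 : (1.2030017:ℝ)^1 ≤ (Real.sqrt 2 * Real.sin (π * 1 / 5))⁻¹ ^ 1 := term_ge (sin_pos_real (by norm_num) (by norm_num)) hs2 (by norm_num) (by norm_num) 1
        have hs3 : Real.sin (π * 3 / 10) ≤ (0.9424779) := sin_ub_lin (a:=3) (b:=10) (q:=0.9424779) (by norm_num) (by norm_num) (by norm_num)
        have B3 : (0.7502634:ℝ)^1 ≤ (Real.sqrt 2 * Real.sin (π * 3 / 10))⁻¹ ^ 1 := term_ge (sin_pos_real (by norm_num) (by norm_num)) hs3 (by norm_num) (by norm_num) 1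
        have hs4 : Real.sin (π * 4 / 10) ≤ ((1:ℝ)) := Real.sin_le_one _
        have B4 : (0.7071067:ℝ)^1 ≤ (Real.sqrt 2 * Real.sin (π * 4 / 10))⁻¹ ^ 1 := term_ge (sin_pos_real (by norm_num) (by norm_num)) hs4 (by norm_num) (by norm_num) 1
        have hs5 : Real.sin (π/2) ≤ ((1:ℝ)) := Real.sin_pi_div_two.le
        have B5 : (0.7071067:ℝ)^1 ≤ (Real.sqrt 2 * Real.sin (π/2))⁻¹ ^ 1 := term_ge (by rw [Real.sin_pi_div_two]; norm_num) hs5 (by norm_num) (by norm_num) 1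
        linarith [B1, B2, B3, B4, B5]
    · exact iff_of_true (n3_tail hmu) (by rw [show mThreshold 3 = 9 by decide]; omega)
  by_cases h4 : n = 4
  · subst h4
    rcases lt_or_ge m 10 with hmu | hmu
    · interval_cases m
      · exact iff_of_false (not_lt.mpr (neg_small _ (by norm_num) (by norm_num))) (by decide)
      · exact iff_of_false (not_lt.mpr (neg_small _ (by norm_num) (by norm_num))) (by decide)
      · exact iff_of_false (not_lt.mpr (neg_small _ (by norm_num) (by norm_num))) (by decide)
      · refine iff_of_false (not_lt.mpr ?_) (by decide)
        rw [show (Finset.Icc 1 (5-1) : Finset ℕ) = ({1,2,3,4} : Finset ℕ) from rfl]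
        rw [Finset.sum_insert (by decide), Finset.sum_insert (by decide), Finset.sum_insert (by decide), Finset.sum_singleton]
        push_cast
        rw [show (π * 4 / 5 : ℝ) = π - π * 1 / 5 by ring, Real.sin_pi_sub]
        rw [show (π * 3 / 5 : ℝ) = π - π * 2 / 5 by ring, Real.sin_pi_sub]
        have hs1 : ((0.5877852:ℝ)) ≤ Real.sin (π * 1 / 5) := s15_lb
        have B1 : (Real.sqrt 2 * Real.sin (π * 1 / 5))⁻¹ ^ 2 ≤ (1.2030021:ℝ)^2 := term_le (by norm_num) hs1 (by norm_num) 2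
        have hs2 : ((1 - (0.3141593:ℝ)^2/2)) ≤ Real.sin (π * 2 / 5) := sin_lb_quad (a:=2) (b:=5) (r:=0.3141593) (by norm_num) (by norm_num) (by norm_num) (by norm_num)
        have B2 : (Real.sqrt 2 * Real.sin (π * 2 / 5))⁻¹ ^ 2 ≤ (0.7438125:ℝ)^2 := term_le (by norm_num) hs2 (by norm_num) 2
        linarith [B1, B2]
      · refine iff_of_false (not_lt.mpr ?_) (by decide)
        rw [show (Finset.Icc 1 (6-1) : Finset ℕ) = ({1,2,3,4,5} : Finset ℕ) from rfl]
        rw [Finset.sum_insert (by decide), Finset.sum_insert (by decide), Finset.sum_insert (by decide), Finset.sum_insert (by decide), Finset.sum_singleton]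
        push_cast
        rw [show (π * 5 / 6 : ℝ) = π - π * 1 / 6 by ring, Real.sin_pi_sub]
        rw [show (π * 4 / 6 : ℝ) = π - π * 2 / 6 by ring, Real.sin_pi_sub]
        rw [show (π * 1 / 6 : ℝ) = π/6 by ring]
        rw [show (π * 2 / 6 : ℝ) = π/3 by ring]
        rw [show (π * 3 / 6 : ℝ) = π/2 by ring]
        have hs1 : ((0.5:ℝ)) ≤ Real.sin (π/6) := s16_lb
        have B1 : (Real.sqrt 2 * Real.sin (π/6))⁻¹ ^ 2 ≤ (1.4142137:ℝ)^2 := term_le (by norm_num) hs1 (by norm_num) 2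
        have hs2 : ((0.8660254:ℝ)) ≤ Real.sin (π/3) := s13_lb
        have B2 : (Real.sqrt 2 * Real.sin (π/3))⁻¹ ^ 2 ≤ (0.8164967:ℝ)^2 := term_le (by norm_num) hs2 (by norm_num) 2
        have hs3 : ((1:ℝ)) ≤ Real.sin (π/2) := Real.sin_pi_div_two.ge
        have B3 : (Real.sqrt 2 * Real.sin (π/2))⁻¹ ^ 2 ≤ (0.7071069:ℝ)^2 := term_le (by norm_num) hs3 (by norm_num) 2
        linarith [B1, B2, B3]
      · refine iff_of_true ?_ (by decide)
        rw [show (Finset.Icc 1 (7-1) : Finset ℕ) = ({1,2,3,4,5,6} : Finset ℕ) from rfl]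
        rw [Finset.sum_insert (by decide), Finset.sum_insert (by decide), Finset.sum_insert (by decide), Finset.sum_insert (by decide), Finset.sum_insert (by decide), Finset.sum_singleton]
        push_cast
        rw [show (π * 6 / 7 : ℝ) = π - π * 1 / 7 by ring, Real.sin_pi_sub]
        rw [show (π * 5 / 7 : ℝ) = π - π * 2 / 7 by ring, Real.sin_pi_sub]
        rw [show (π * 4 / 7 : ℝ) = π - π * 3 / 7 by ring, Real.sin_pi_sub]
        have hs1 : Real.sin (π * 1 / 7) ≤ (0.448799) := sin_ub_lin (a:=1) (b:=7) (q:=0.448799) (by norm_num) (by norm_num) (by norm_num)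
        have B1 : (1.5755533:ℝ)^2 ≤ (Real.sqrt 2 * Real.sin (π * 1 / 7))⁻¹ ^ 2 := term_ge (sin_pos_real (by norm_num) (by norm_num)) hs1 (by norm_num) (by norm_num) 2
        have hs2 : Real.sin (π * 2 / 7) ≤ (0.897598) := sin_ub_lin (a:=2) (b:=7) (q:=0.897598) (by norm_num) (by norm_num) (by norm_num)
        have B2 : (0.7877766:ℝ)^2 ≤ (Real.sqrt 2 * Real.sin (π * 2 / 7))⁻¹ ^ 2 := term_ge (sin_pos_real (by norm_num) (by norm_num)) hs2 (by norm_num) (by norm_num) 2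
        have hs3 : Real.sin (π * 3 / 7) ≤ ((1:ℝ)) := Real.sin_le_one _
        have B3 : (0.7071067:ℝ)^2 ≤ (Real.sqrt 2 * Real.sin (π * 3 / 7))⁻¹ ^ 2 := term_ge (sin_pos_real (by norm_num) (by norm_num)) hs3 (by norm_num) (by norm_num) 2
        linarith [B1, B2, B3]
      · refine iff_of_true ?_ (by decide)
        rw [show (Finset.Icc 1 (8-1) : Finset ℕ) = ({1,2,3,4,5,6,7} : Finset ℕ) from rfl]
        rw [Finset.sum_insert (by decide), Finset.sum_insert (by decide), Finset.sum_insert (by decide), Finset.sum_insert (by decide), Finset.sum_insert (by decide), Finset.sum_insert (by decide), Finset.sum_singleton]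
        push_cast
        rw [show (π * 7 / 8 : ℝ) = π - π * 1 / 8 by ring, Real.sin_pi_sub]
        rw [show (π * 6 / 8 : ℝ) = π - π * 2 / 8 by ring, Real.sin_pi_sub]
        rw [show (π * 5 / 8 : ℝ) = π - π * 3 / 8 by ring, Real.sin_pi_sub]
        rw [show (π * 2 / 8 : ℝ) = π/4 by ring]
        rw [show (π * 4 / 8 : ℝ) = π/2 by ring]
        have hs1 : Real.sin (π * 1 / 8) ≤ (0.3926992) := sin_ub_lin (a:=1) (b:=8) (q:=0.3926992) (by norm_num) (by norm_num) (by norm_num)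
        have B1 : (1.800632:ℝ)^2 ≤ (Real.sqrt 2 * Real.sin (π * 1 / 8))⁻¹ ^ 2 := term_ge (sin_pos_real (by norm_num) (by norm_num)) hs1 (by norm_num) (by norm_num) 2
        have hs2 : Real.sin (π/4) ≤ ((0.7071068:ℝ)) := s14_ub
        have B2 : (0.9999999:ℝ)^2 ≤ (Real.sqrt 2 * Real.sin (π/4))⁻¹ ^ 2 := term_ge (by rw [Real.sin_pi_div_four]; positivity) hs2 (by norm_num) (by norm_num) 2
        have hs3 : Real.sin (π * 3 / 8) ≤ ((1:ℝ)) := Real.sin_le_one _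
        have B3 : (0.7071067:ℝ)^2 ≤ (Real.sqrt 2 * Real.sin (π * 3 / 8))⁻¹ ^ 2 := term_ge (sin_pos_real (by norm_num) (by norm_num)) hs3 (by norm_num) (by norm_num) 2
        have hs4 : Real.sin (π/2) ≤ ((1:ℝ)) := Real.sin_pi_div_two.le
        have B4 : (0.7071067:ℝ)^2 ≤ (Real.sqrt 2 * Real.sin (π/2))⁻¹ ^ 2 := term_ge (by rw [Real.sin_pi_div_two]; norm_num) hs4 (by norm_num) (by norm_num) 2
        linarith [B1, B2, B3, B4]
      · refine iff_of_true ?_ (by decide)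
        rw [show (Finset.Icc 1 (9-1) : Finset ℕ) = ({1,2,3,4,5,6,7,8} : Finset ℕ) from rfl]
        rw [Finset.sum_insert (by decide), Finset.sum_insert (by decide), Finset.sum_insert (by decide), Finset.sum_insert (by decide), Finset.sum_insert (by decide), Finset.sum_insert (by decide), Finset.sum_insert (by decide), Finset.sum_singleton]
        push_cast
        rw [show (π * 8 / 9 : ℝ) = π - π * 1 / 9 by ring, Real.sin_pi_sub]
        rw [show (π * 7 / 9 : ℝ) = π - π * 2 / 9 by ring, Real.sin_pi_sub]
        rw [show (π * 6 / 9 : ℝ) = π - π * 3 / 9 by ring, Real.sin_pi_sub]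
        rw [show (π * 5 / 9 : ℝ) = π - π * 4 / 9 by ring, Real.sin_pi_sub]
        rw [show (π * 3 / 9 : ℝ) = π/3 by ring]
        have hs1 : Real.sin (π * 1 / 9) ≤ (0.3490659) := sin_ub_lin (a:=1) (b:=9) (q:=0.3490659) (by norm_num) (by norm_num) (by norm_num)
        have B1 : (2.0257113:ℝ)^2 ≤ (Real.sqrt 2 * Real.sin (π * 1 / 9))⁻¹ ^ 2 := term_ge (sin_pos_real (by norm_num) (by norm_num)) hs1 (by norm_num) (by norm_num) 2
        have hs2 : Real.sin (π * 2 / 9) ≤ (0.6981318) := sin_ub_lin (a:=2) (b:=9) (q:=0.6981318) (by norm_num) (by norm_num) (by norm_num)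
        have B2 : (1.0128556:ℝ)^2 ≤ (Real.sqrt 2 * Real.sin (π * 2 / 9))⁻¹ ^ 2 := term_ge (sin_pos_real (by norm_num) (by norm_num)) hs2 (by norm_num) (by norm_num) 2
        have hs3 : Real.sin (π/3) ≤ ((0.8660255:ℝ)) := s13_ub
        have B3 : (0.8164964:ℝ)^2 ≤ (Real.sqrt 2 * Real.sin (π/3))⁻¹ ^ 2 := term_ge (by rw [Real.sin_pi_div_three]; positivity) hs3 (by norm_num) (by norm_num) 2
        have hs4 : Real.sin (π * 4 / 9) ≤ ((1:ℝ)) := Real.sin_le_one _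
        have B4 : (0.7071067:ℝ)^2 ≤ (Real.sqrt 2 * Real.sin (π * 4 / 9))⁻¹ ^ 2 := term_ge (sin_pos_real (by norm_num) (by norm_num)) hs4 (by norm_num) (by norm_num) 2
        linarith [B1, B2, B3, B4]
    · exact iff_of_true (n4_tail hmu) (by rw [show mThreshold 4 = 7 by decide]; omega)
  by_cases h5 : n = 5
  · subst h5
    rcases lt_or_ge m 7 with hmu | hmu
    · interval_cases m
      · exact iff_of_false (not_lt.mpr (neg_small _ (by norm_num) (by norm_num))) (by decide)
      · exact iff_of_false (not_lt.mpr (neg_small _ (by norm_num) (by norm_num))) (by decide)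
      · exact iff_of_false (not_lt.mpr (neg_small _ (by norm_num) (by norm_num))) (by decide)
      · refine iff_of_false (not_lt.mpr ?_) (by decide)
        rw [show (Finset.Icc 1 (5-1) : Finset ℕ) = ({1,2,3,4} : Finset ℕ) from rfl]
        rw [Finset.sum_insert (by decide), Finset.sum_insert (by decide), Finset.sum_insert (by decide), Finset.sum_singleton]
        push_cast
        rw [show (π * 4 / 5 : ℝ) = π - π * 1 / 5 by ring, Real.sin_pi_sub]
        rw [show (π * 3 / 5 : ℝ) = π - π * 2 / 5 by ring, Real.sin_pi_sub]
        have hs1 : ((0.5877852:ℝ)) ≤ Real.sin (π * 1 / 5) := s15_lb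
        have B1 : (Real.sqrt 2 * Real.sin (π * 1 / 5))⁻¹ ^ 3 ≤ (1.2030021:ℝ)^3 := term_le (by norm_num) hs1 (by norm_num) 3
        have hs2 : ((1 - (0.3141593:ℝ)^2/2)) ≤ Real.sin (π * 2 / 5) := sin_lb_quad (a:=2) (b:=5) (r:=0.3141593) (by norm_num) (by norm_num) (by norm_num) (by norm_num)
        have B2 : (Real.sqrt 2 * Real.sin (π * 2 / 5))⁻¹ ^ 3 ≤ (0.7438125:ℝ)^3 := term_le (by norm_num) hs2 (by norm_num) 3
        linarith [B1, B2]
      · refine iff_of_true ?_ (by decide)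
        rw [show (Finset.Icc 1 (6-1) : Finset ℕ) = ({1,2,3,4,5} : Finset ℕ) from rfl]
        rw [Finset.sum_insert (by decide), Finset.sum_insert (by decide), Finset.sum_insert (by decide), Finset.sum_insert (by decide), Finset.sum_singleton]
        push_cast
        rw [show (π * 5 / 6 : ℝ) = π - π * 1 / 6 by ring, Real.sin_pi_sub]
        rw [show (π * 4 / 6 : ℝ) = π - π * 2 / 6 by ring, Real.sin_pi_sub]
        rw [show (π * 1 / 6 : ℝ) = π/6 by ring]
        rw [show (π * 2 / 6 : ℝ) = π/3 by ring]
        rw [show (π * 3 / 6 : ℝ) = π/2 by ring]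
        have hs1 : Real.sin (π/6) ≤ ((0.5:ℝ)) := s16_ub
        have B1 : (1.4142135:ℝ)^3 ≤ (Real.sqrt 2 * Real.sin (π/6))⁻¹ ^ 3 := term_ge (by rw [Real.sin_pi_div_six]; norm_num) hs1 (by norm_num) (by norm_num) 3
        have hs2 : Real.sin (π/3) ≤ ((0.8660255:ℝ)) := s13_ub
        have B2 : (0.8164964:ℝ)^3 ≤ (Real.sqrt 2 * Real.sin (π/3))⁻¹ ^ 3 := term_ge (by rw [Real.sin_pi_div_three]; positivity) hs2 (by norm_num) (by norm_num) 3
        have hs3 : Real.sin (π/2) ≤ ((1:ℝ)) := Real.sin_pi_div_two.le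
        have B3 : (0.7071067:ℝ)^3 ≤ (Real.sqrt 2 * Real.sin (π/2))⁻¹ ^ 3 := term_ge (by rw [Real.sin_pi_div_two]; norm_num) hs3 (by norm_num) (by norm_num) 3
        linarith [B1, B2, B3]
    · exact iff_of_true (n5_tail hmu) (by rw [show mThreshold 5 = 6 by decide]; omega)
  by_cases h6 : n = 6
  · subst h6
    rcases lt_or_ge m 6 with hmu | hmu
    · interval_cases m
      · exact iff_of_false (not_lt.mpr (neg_small _ (by norm_num) (by norm_num))) (by decide)
      · exact iff_of_false (not_lt.mpr (neg_small _ (by norm_num) (by norm_num))) (by decide)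
      · exact iff_of_false (not_lt.mpr (neg_small _ (by norm_num) (by norm_num))) (by decide)
      · refine iff_of_false (not_lt.mpr ?_) (by decide)
        rw [show (Finset.Icc 1 (5-1) : Finset ℕ) = ({1,2,3,4} : Finset ℕ) from rfl]
        rw [Finset.sum_insert (by decide), Finset.sum_insert (by decide), Finset.sum_insert (by decide), Finset.sum_singleton]
        push_cast
        rw [show (π * 4 / 5 : ℝ) = π - π * 1 / 5 by ring, Real.sin_pi_sub]
        rw [show (π * 3 / 5 : ℝ) = π - π * 2 / 5 by ring, Real.sin_pi_sub]
        have hs1 : ((0.5877852:ℝ)) ≤ Real.sin (π * 1 / 5) := s15_lb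
        have B1 : (Real.sqrt 2 * Real.sin (π * 1 / 5))⁻¹ ^ 4 ≤ (1.2030021:ℝ)^4 := term_le (by norm_num) hs1 (by norm_num) 4
        have hs2 : ((1 - (0.3141593:ℝ)^2/2)) ≤ Real.sin (π * 2 / 5) := sin_lb_quad (a:=2) (b:=5) (r:=0.3141593) (by norm_num) (by norm_num) (by norm_num) (by norm_num)
        have B2 : (Real.sqrt 2 * Real.sin (π * 2 / 5))⁻¹ ^ 4 ≤ (0.7438125:ℝ)^4 := term_le (by norm_num) hs2 (by norm_num) 4
        linarith [B1, B2]
    · exact iff_of_true (n6_tail hmu) (by rw [show mThreshold 6 = 6 by decide]; omega)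
  -- n ≥ 7
  have hn7 : 7 ≤ n := by omega
  have hth : mThreshold n = 5 := by
    unfold mThreshold
    rw [if_neg h3, if_neg h4, if_neg (by omega)]
  rw [hth]
  rcases lt_or_ge m 5 with hmu | hmu
  · interval_cases m
    · exact iff_of_false (not_lt.mpr (neg_small _ (by norm_num) (by norm_num))) (by omega)
    · exact iff_of_false (not_lt.mpr (neg_small _ (by norm_num) (by norm_num))) (by omega)
    · exact iff_of_false (not_lt.mpr (neg_small _ (by norm_num) (by norm_num))) (by omega)
  · rcases eq_or_lt_of_le hmu with he | hlt
    · subst he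
      exact iff_of_true (n7_m5 hn7) (by omega)
    · exact iff_of_true (n7_tail hn7 (by omega)) (by omega)
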